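/- Under the conditions of the reduced relative entropy estimate (same equations, same initial data, bounded L∞ norms) with zero residual R ≡ 0, strong periodic solutions of the regularized elastodynamics system ∂ₜu − ∂ₓv = 0, ∂ₜv − ∂ₓW′(u) = μ∂ₓₓv − γ∂ₓₓₓu are unique. -/

import Mathlib

open Set


section Helpers

variable {E : Type*} [NormedAddCommGroup E] [NormedSpace ℝ E]

lemma hasDerivAt_fst' {G : ℝ × ℝ → E} (hG : Differentiable ℝ G) (t x : ℝ) :
    HasDerivAt (fun s => G (s, x)) (fderiv ℝ G (t, x) (1, 0)) t := by
  have h := (hG (t, x)).hasFDerivAt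
  have hg : HasDerivAt (fun s : ℝ => ((s, x) : ℝ × ℝ)) ((1 : ℝ), (0 : ℝ)) t :=
    (hasDerivAt_id t).prodMk (hasDerivAt_const t x)
  simpa [Function.comp_def] using h.comp_hasDerivAt t hg

lemma hasDerivAt_snd' {G : ℝ × ℝ → E} (hG : Differentiable ℝ G) (t x : ℝ) :
    HasDerivAt (fun y => G (t, y)) (fderiv ℝ G (t, x) (0, 1)) x := by
  have h := (hG (t, x)).hasFDerivAt
  have hg : HasDerivAt (fun y : ℝ => ((t, y) : ℝ × ℝ)) ((0 : ℝ), (1 : ℝ)) x :=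
    (hasDerivAt_const x t).prodMk (hasDerivAt_id x)
  simpa [Function.comp_def] using h.comp_hasDerivAt x hg

lemma deriv_fst' {G : ℝ × ℝ → E} (hG : Differentiable ℝ G) (t x : ℝ) :
    deriv (fun s => G (s, x)) t = fderiv ℝ G (t, x) (1, 0) :=
  (hasDerivAt_fst' hG t x).deriv

lemma deriv_snd' {G : ℝ × ℝ → E} (hG : Differentiable ℝ G) (t x : ℝ) :
    deriv (fun y => G (t, y)) x = fderiv ℝ G (t, x) (0, 1) :=
  (hasDerivAt_snd' hG t x).deriv

/-- joint smoothness of the x-partial derivative -/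
lemma contDiff_derivx {n : ℕ} {f : ℝ → ℝ → ℝ}
    (hf : ContDiff ℝ (n + 1 : ℕ) (fun p : ℝ × ℝ => f p.1 p.2)) :
    ContDiff ℝ n (fun p : ℝ × ℝ => deriv (f p.1) p.2) := by
  have hd : Differentiable ℝ (fun p : ℝ × ℝ => f p.1 p.2) :=
    hf.differentiable (by simp)
  have : (fun p : ℝ × ℝ => deriv (f p.1) p.2)
      = fun p : ℝ × ℝ => fderiv ℝ (fun q : ℝ × ℝ => f q.1 q.2) p (0, 1) := by
    funext p
    exact deriv_snd' hd p.1 p.2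
  rw [this]
  have h2 : ContDiff ℝ n (fderiv ℝ (fun q : ℝ × ℝ => f q.1 q.2)) :=
    hf.fderiv_right (by exact_mod_cast le_refl (n + 1 : ℕ))
  exact h2.clm_apply contDiff_const

/-- joint smoothness of the t-partial derivative -/
lemma contDiff_derivt {n : ℕ} {f : ℝ → ℝ → ℝ}
    (hf : ContDiff ℝ (n + 1 : ℕ) (fun p : ℝ × ℝ => f p.1 p.2)) :
    ContDiff ℝ n (fun p : ℝ × ℝ => deriv (fun s => f s p.2) p.1) := by
  have hd : Differentiable ℝ (fun p : ℝ × ℝ => f p.1 p.2) :=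
    hf.differentiable (by simp)
  have : (fun p : ℝ × ℝ => deriv (fun s => f s p.2) p.1)
      = fun p : ℝ × ℝ => fderiv ℝ (fun q : ℝ × ℝ => f q.1 q.2) p (1, 0) := by
    funext p
    exact deriv_fst' hd p.1 p.2
  rw [this]
  have h2 : ContDiff ℝ n (fderiv ℝ (fun q : ℝ × ℝ => f q.1 q.2)) :=
    hf.fderiv_right (by exact_mod_cast le_refl (n + 1 : ℕ))
  exact h2.clm_apply contDiff_const

/-- slices in x are smooth -/
lemma contDiff_slicex {n : ℕ∞} {f : ℝ → ℝ → ℝ}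
    (hf : ContDiff ℝ n (fun p : ℝ × ℝ => f p.1 p.2)) (t : ℝ) :
    ContDiff ℝ n (f t) := by
  have := hf.comp (contDiff_prodMk_right (F := ℝ) (n := n) t)
  exact this

/-- slices in t are smooth -/
lemma contDiff_slicet {n : ℕ∞} {f : ℝ → ℝ → ℝ}
    (hf : ContDiff ℝ n (fun p : ℝ × ℝ => f p.1 p.2)) (x : ℝ) :
    ContDiff ℝ n (fun s => f s x) := by
  have := hf.comp (contDiff_prodMk_left (E := ℝ) (n := n) x)
  exact this

/-- Schwarz / Clairaut in the form needed: the time derivative of the space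
derivative equals the space derivative of the time derivative. -/
lemma hasDerivAt_derivx_t {f : ℝ → ℝ → ℝ}
    (hf : ContDiff ℝ 2 (fun p : ℝ × ℝ => f p.1 p.2)) (t x : ℝ) :
    HasDerivAt (fun s => deriv (f s) x)
      (deriv (fun y => deriv (fun s => f s y) t) x) t := by
  set F : ℝ × ℝ → ℝ := fun p => f p.1 p.2 with hF
  have hFd : Differentiable ℝ F := hf.differentiable two_ne_zero
  have hF' : ContDiff ℝ 1 (fderiv ℝ F) := hf.fderiv_right (le_refl 2)
  have hF'd : Differentiable ℝ (fderiv ℝ F) := hF'.differentiable one_ne_zero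
  set f'' := fderiv ℝ (fderiv ℝ F) (t, x) with hf''
  -- LHS
  have h1 : (fun s => deriv (f s) x) = fun s => fderiv ℝ F (s, x) (0, 1) := by
    funext s; exact deriv_snd' hFd s x
  have h2 : HasDerivAt (fun s => fderiv ℝ F (s, x)) (f'' (1, 0)) t :=
    hasDerivAt_fst' hF'd t x
  have h3 : HasDerivAt (fun s => fderiv ℝ F (s, x) ((0 : ℝ), (1 : ℝ)))
      (f'' (1, 0) (0, 1)) t := by
    simpa using h2.clm_apply (hasDerivAt_const t ((0 : ℝ), (1 : ℝ)))
  -- symmetry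
  have hsymm : f'' (1, 0) (0, 1) = f'' (0, 1) (1, 0) :=
    second_derivative_symmetric (fun y => (hFd y).hasFDerivAt)
      (hF'd (t, x)).hasFDerivAt _ _
  -- RHS
  have h4 : (fun y => deriv (fun s => f s y) t) = fun y => fderiv ℝ F (t, y) (1, 0) := by
    funext y; exact deriv_fst' hFd t y
  have h5 : HasDerivAt (fun y => fderiv ℝ F (t, y)) (f'' (0, 1)) x :=
    hasDerivAt_snd' hF'd t x
  have h6 : HasDerivAt (fun y => fderiv ℝ F (t, y) ((1 : ℝ), (0 : ℝ)))
      (f'' (0, 1) (1, 0)) x := by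
    simpa using h5.clm_apply (hasDerivAt_const x ((1 : ℝ), (0 : ℝ)))
  have h7 : deriv (fun y => deriv (fun s => f s y) t) x = f'' (0, 1) (1, 0) := by
    rw [h4]; exact h6.deriv
  rw [h1, h7, ← hsymm]
  exact h3

lemma Function.Periodic.deriv_periodic {f : ℝ → ℝ} (hf : Function.Periodic f 1) :
    Function.Periodic (deriv f) 1 := by
  intro x
  have h : (fun y : ℝ => f (y + 1)) = f := funext hf
  calc deriv f (x + 1) = deriv (fun y : ℝ => f (y + 1)) x := (deriv_comp_add_const f 1 x).symm
  _ = deriv f x := by rw [h]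

/-- integral of the derivative of a C¹ periodic function over one period vanishes -/
lemma integral_deriv_periodic (g : ℝ → ℝ) (hg : Differentiable ℝ g)
    (hg' : Continuous (deriv g)) (hper : Function.Periodic g 1) :
    ∫ x in (0:ℝ)..1, deriv g x = 0 := by
  rw [intervalIntegral.integral_deriv_eq_sub (fun x _ => hg x)
    (hg'.intervalIntegrable 0 1)]
  have := hper 0
  simp only [zero_add] at this
  rw [this, sub_self]

end Helpers

lemma contDiff_deriv_one {n : ℕ} {f : ℝ → ℝ} (hf : ContDiff ℝ ((n : ℕ∞) + 1) f) :
    ContDiff ℝ n (deriv f) := by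
  have h := (contDiff_succ_iff_deriv (n := (n : ℕ∞)) (f := f)).mp (by exact_mod_cast hf)
  exact_mod_cast h.2.2

set_option maxHeartbeats 1000000 in
/-- Uniqueness of strong periodic solutions of the regularized
elastodynamics system (zero residual case of the reduced relative entropy bound). -/
theorem uniqueness_of_strong_solutions
    (W : ℝ → ℝ) (hW : ContDiff ℝ 3 W)
    (γ μ : ℝ) (hγ : 0 < γ) (hμ : 0 ≤ μ)
    (u v hatu hatv : ℝ → ℝ → ℝ)
    (hu : ContDiff ℝ 3 (fun p : ℝ × ℝ => u p.1 p.2))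
    (hv : ContDiff ℝ 3 (fun p : ℝ × ℝ => v p.1 p.2))
    (hhatu : ContDiff ℝ 3 (fun p : ℝ × ℝ => hatu p.1 p.2))
    (hhatv : ContDiff ℝ 3 (fun p : ℝ × ℝ => hatv p.1 p.2))
    (hper : ∀ t, Function.Periodic (u t) 1 ∧ Function.Periodic (v t) 1 ∧
      Function.Periodic (hatu t) 1 ∧ Function.Periodic (hatv t) 1)
    -- exact solution
    (heq1 : ∀ t x, deriv (fun s => u s x) t - deriv (v t) x = 0)
    (heq2 : ∀ t x,
      deriv (fun s => v s x) t - deriv (fun y => deriv W (u t y)) x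
        = μ * deriv (deriv (v t)) x - γ * deriv (deriv (deriv (u t))) x)
    -- perturbed solution with residual R
    (heq1' : ∀ t x, deriv (fun s => hatu s x) t - deriv (hatv t) x = 0)
    (heq2' : ∀ t x,
      deriv (fun s => hatv s x) t - deriv (fun y => deriv W (hatu t y)) x
        = μ * deriv (deriv (hatv t)) x - γ * deriv (deriv (deriv (hatu t))) x)
    -- same initial data
    (hinitu : ∀ x, u 0 x = hatu 0 x) (hinitv : ∀ x, v 0 x = hatv 0 x)
    -- mean-zero difference (so that the Poincaré inequality applies)
    (hmean : ∀ t, (∫ x in (0:ℝ)..1, (u t x - hatu t x)) = 0)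
    -- L∞ bound M̄ and C³ bound W̄ of W on [−M̄, M̄]
    (Mb Wb : ℝ)
    (hMb : ∀ t x, |u t x| ≤ Mb ∧ |hatu t x| ≤ Mb)
    (hWb : ∀ y ∈ Icc (-Mb) Mb,
      |W y| ≤ Wb ∧ |deriv W y| ≤ Wb ∧ |deriv (deriv W) y| ≤ Wb ∧
        |deriv (deriv (deriv W)) y| ≤ Wb)
    -- Poincaré constant on S¹ for mean-zero functions
    (CP : ℝ) (hCPpos : 0 < CP)
    (hCP : ∀ w : ℝ → ℝ, ContDiff ℝ 1 w → Function.Periodic w 1 →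
      (∫ x in (0:ℝ)..1, w x) = 0 →
      (∫ x in (0:ℝ)..1, (w x) ^ 2) ≤ CP ^ 2 * ∫ x in (0:ℝ)..1, (deriv w x) ^ 2) :
    ∀ t : ℝ, 0 ≤ t → ∀ x : ℝ, u t x = hatu t x ∧ v t x = hatv t x := by
  classical
  -- difference functions
  set φ : ℝ → ℝ → ℝ := fun t x => u t x - hatu t x with hφdef
  set ψ : ℝ → ℝ → ℝ := fun t x => v t x - hatv t x with hψdef
  have hφ : ContDiff ℝ 3 (fun p : ℝ × ℝ => φ p.1 p.2) := hu.sub hhatu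
  have hψ : ContDiff ℝ 3 (fun p : ℝ × ℝ => ψ p.1 p.2) := hv.sub hhatv
  -- partial derivative functions
  set φx : ℝ → ℝ → ℝ := fun t x => deriv (φ t) x with hφxdef
  set ψx : ℝ → ℝ → ℝ := fun t x => deriv (ψ t) x with hψxdef
  set ψxx : ℝ → ℝ → ℝ := fun t x => deriv (deriv (ψ t)) x with hψxxdef
  set ψt : ℝ → ℝ → ℝ := fun t x => deriv (fun s => ψ s x) t with hψtdef
  -- joint regularity
  have hφxC : ContDiff ℝ 2 (fun p : ℝ × ℝ => φx p.1 p.2) :=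
    contDiff_derivx (n := 2) (by exact_mod_cast hφ)
  have hψxC : ContDiff ℝ 2 (fun p : ℝ × ℝ => ψx p.1 p.2) :=
    contDiff_derivx (n := 2) (by exact_mod_cast hψ)
  have hψxxC : ContDiff ℝ 1 (fun p : ℝ × ℝ => ψxx p.1 p.2) :=
    contDiff_derivx (n := 1) (f := fun s => deriv (ψ s)) (by exact_mod_cast hψxC)
  have hψtC : ContDiff ℝ 2 (fun p : ℝ × ℝ => ψt p.1 p.2) :=
    contDiff_derivt (n := 2) (by exact_mod_cast hψ)
  have hhatuxC : ContDiff ℝ 2 (fun p : ℝ × ℝ => deriv (hatu p.1) p.2) :=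
    contDiff_derivx (n := 2) (by exact_mod_cast hhatu)
  have huxC : ContDiff ℝ 2 (fun p : ℝ × ℝ => deriv (u p.1) p.2) :=
    contDiff_derivx (n := 2) (by exact_mod_cast hu)
  have hvxC : ContDiff ℝ 2 (fun p : ℝ × ℝ => deriv (v p.1) p.2) :=
    contDiff_derivx (n := 2) (by exact_mod_cast hv)
  have hhatvxC : ContDiff ℝ 2 (fun p : ℝ × ℝ => deriv (hatv p.1) p.2) :=
    contDiff_derivx (n := 2) (by exact_mod_cast hhatv)
  have huxxC : ContDiff ℝ 1 (fun p : ℝ × ℝ => deriv (deriv (u p.1)) p.2) :=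
    contDiff_derivx (n := 1) (f := fun s => deriv (u s)) (by exact_mod_cast huxC)
  have hhatuxxC : ContDiff ℝ 1 (fun p : ℝ × ℝ => deriv (deriv (hatu p.1)) p.2) :=
    contDiff_derivx (n := 1) (f := fun s => deriv (hatu s)) (by exact_mod_cast hhatuxC)
  have hvxxC : ContDiff ℝ 1 (fun p : ℝ × ℝ => deriv (deriv (v p.1)) p.2) :=
    contDiff_derivx (n := 1) (f := fun s => deriv (v s)) (by exact_mod_cast hvxC)
  have hhatvxxC : ContDiff ℝ 1 (fun p : ℝ × ℝ => deriv (deriv (hatv p.1)) p.2) :=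
    contDiff_derivx (n := 1) (f := fun s => deriv (hatv s)) (by exact_mod_cast hhatvxC)
  have hφxxC : ContDiff ℝ 1 (fun p : ℝ × ℝ => deriv (deriv (φ p.1)) p.2) :=
    contDiff_derivx (n := 1) (f := fun s => deriv (φ s)) (by exact_mod_cast hφxC)
  have hφxxxC : ContDiff ℝ 0 (fun p : ℝ × ℝ => deriv (deriv (deriv (φ p.1))) p.2) :=
    contDiff_derivx (n := 0) (f := fun s => deriv (deriv (φ s))) (by exact_mod_cast hφxxC)
  have hW' : ContDiff ℝ 2 (deriv W) := contDiff_deriv_one (n := 2) (by exact_mod_cast hW)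
  have hW'' : ContDiff ℝ 1 (deriv (deriv W)) :=
    contDiff_deriv_one (n := 1) (by exact_mod_cast hW')
  -- slice regularity
  have haC : ∀ t, ContDiff ℝ 3 (ψ t) := fun t => contDiff_slicex hψ t
  have hbC : ∀ t, ContDiff ℝ 3 (φ t) := fun t => contDiff_slicex hφ t
  have hbdiff : ∀ t, Differentiable ℝ (φ t) := fun t => (hbC t).differentiable (by norm_num)
  have hadiff : ∀ t, Differentiable ℝ (ψ t) := fun t => (haC t).differentiable (by norm_num)
  -- periodicity of differences and derivatives
  have hφper : ∀ t, Function.Periodic (φ t) 1 := by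
    intro t x
    simp only [hφdef, (hper t).1 x, (hper t).2.2.1 x]
  have hψper : ∀ t, Function.Periodic (ψ t) 1 := by
    intro t x
    simp only [hψdef, (hper t).2.1 x, (hper t).2.2.2 x]
  -- the energy
  set Eg : ℝ → ℝ := fun s => ∫ x in (0:ℝ)..1, ((ψ s x) ^ 2 + γ * (φx s x) ^ 2) with hEgdef
  set Pt : ℝ → ℝ → ℝ := fun t x => 2 * (ψ t x * ψt t x) + γ * (2 * (φx t x * ψxx t x))
    with hPtdef
  -- time derivative of the inner integrand
  have hinner : ∀ t x, HasDerivAt (fun s => (ψ s x) ^ 2 + γ * (φx s x) ^ 2) (Pt t x) t := by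
    intro t x
    have ha : HasDerivAt (fun s => ψ s x) (ψt t x) t :=
      ((contDiff_slicet hψ x).differentiable (by norm_num) t).hasDerivAt
    have hb : HasDerivAt (fun s => φx s x) (ψxx t x) t := by
      have h0 := hasDerivAt_derivx_t (f := φ) (hφ.of_le (by norm_num)) t x
      have key : (fun y => deriv (fun s => φ s y) t) = deriv (ψ t) := by
        funext y
        have hud : DifferentiableAt ℝ (fun s => u s y) t :=
          ((contDiff_slicet hu y).differentiable (by norm_num) t)
        have hhatud : DifferentiableAt ℝ (fun s => hatu s y) t :=
          ((contDiff_slicet hhatu y).differentiable (by norm_num) t)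
        have hvd : DifferentiableAt ℝ (v t) y :=
          ((contDiff_slicex hv t).differentiable (by norm_num) y)
        have hhatvd : DifferentiableAt ℝ (hatv t) y :=
          ((contDiff_slicex hhatv t).differentiable (by norm_num) y)
        have e1 : deriv (fun s => φ s y) t
            = deriv (fun s => u s y) t - deriv (fun s => hatu s y) t := by
          simp only [hφdef]
          exact deriv_sub hud hhatud
        have e2 : deriv (ψ t) y = deriv (v t) y - deriv (hatv t) y := by
          simp only [hψdef]
          exact deriv_sub hvd hhatvd
        rw [e1, e2]
        have := heq1 t y
        have := heq1' t y
        linarith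
      rw [key] at h0
      exact h0
    have h1 := ha.fun_pow 2
    have h2 := (hb.fun_pow 2).const_mul γ
    have h3 := h1.fun_add h2
    refine h3.congr_deriv ?_
    simp only [hPtdef]
    ring
  -- joint continuity of Pt
  have hPtcont : Continuous (fun p : ℝ × ℝ => Pt p.1 p.2) := by
    apply Continuous.add
    · exact (continuous_const.mul (hψ.continuous.mul hψtC.continuous))
    · exact continuous_const.mul (continuous_const.mul (hφxC.continuous.mul hψxxC.continuous))
  -- differentiating under the integral sign
  have hE' : ∀ t, HasDerivAt Eg (∫ x in (0:ℝ)..1, Pt t x) t := by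
    intro t
    -- uniform bound for Pt on a compact neighbourhood
    obtain ⟨B, hB⟩ : ∃ B, ∀ p ∈ (Icc (t - 1) (t + 1) ×ˢ Icc (0:ℝ) 1),
        ‖(fun p : ℝ × ℝ => Pt p.1 p.2) p‖ ≤ B :=
      ((isCompact_Icc.prod isCompact_Icc)).exists_bound_of_continuousOn
        hPtcont.continuousOn
    have key := intervalIntegral.hasDerivAt_integral_of_dominated_loc_of_deriv_le
      (F := fun s x => (ψ s x) ^ 2 + γ * (φx s x) ^ 2) (F' := Pt) (x₀ := t)
      (s := Metric.ball t 1) (a := (0:ℝ)) (b := 1) (bound := fun _ => B) (μ := MeasureTheory.volume)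
      (Metric.ball_mem_nhds t one_pos) ?_ ?_ ?_ ?_ ?_ ?_
    · exact key.2
    · filter_upwards with s
      apply Continuous.aestronglyMeasurable
      have h1 : Continuous (ψ s) := (haC s).continuous
      have h2 : Continuous (φx s) :=
        hφxC.continuous.comp ((continuous_const (y := s)).prodMk continuous_id)
      exact (h1.pow 2).add (continuous_const.mul (h2.pow 2))
    · apply Continuous.intervalIntegrable
      have h1 : Continuous (ψ t) := (haC t).continuous
      have h2 : Continuous (φx t) :=
        hφxC.continuous.comp ((continuous_const (y := t)).prodMk continuous_id)
      exact (h1.pow 2).add (continuous_const.mul (h2.pow 2))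
    · apply Continuous.aestronglyMeasurable
      exact hPtcont.comp ((continuous_const (y := t)).prodMk continuous_id)
    · filter_upwards with x hx s hs
      have hxI : x ∈ Icc (0:ℝ) 1 := by
        rcases hx with ⟨h1, h2⟩
        constructor
        · exact le_of_lt (by simpa using h1)
        · simpa using h2
      have hsI : s ∈ Icc (t - 1) (t + 1) := by
        have := Metric.mem_ball.mp hs
        rw [Real.dist_eq] at this
        constructor <;> [linarith [abs_lt.mp this] ; linarith [(abs_lt.mp this).2]]
      exact hB (s, x) (Set.mk_mem_prod hsI hxI)
    · apply Continuous.intervalIntegrable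
      exact continuous_const
    · filter_upwards with x _ s _
      exact hinner s x
  -- initial energy
  have hE0 : Eg 0 = 0 := by
    have hφ0 : φ 0 = fun _ => (0:ℝ) := funext fun x => by simp [hφdef, hinitu x]
    have hint : (fun x => (ψ 0 x) ^ 2 + γ * (φx 0 x) ^ 2) = fun _ => (0:ℝ) := by
      funext x
      have h1 : ψ 0 x = 0 := by simp [hψdef, hinitv x]
      have h2 : φx 0 x = 0 := by
        simp only [hφxdef, hφ0, deriv_const]
      rw [h1, h2]
      ring
    simp only [hEgdef, hint]
    simp
  -- nonnegativity of the energy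
  have hEnonneg : ∀ s, 0 ≤ Eg s := by
    intro s
    apply intervalIntegral.integral_nonneg zero_le_one
    intro x _
    have := sq_nonneg (ψ s x)
    have := sq_nonneg (φx s x)
    nlinarith
  -- the energy vanishes for nonnegative times
  have hEzero : ∀ t, 0 ≤ t → Eg t = 0 := by
    intro T hT
    obtain ⟨Kb, hKb⟩ := (isCompact_Icc.prod isCompact_Icc).exists_bound_of_continuousOn
      (hhatuxC.continuous.continuousOn (s := Icc (0:ℝ) T ×ˢ Icc (0:ℝ) 1))
    have hKb0 : 0 ≤ Kb := le_trans (norm_nonneg _)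
      (hKb (0,0) ⟨⟨le_refl 0, hT⟩, ⟨le_refl 0, zero_le_one⟩⟩)
    have hMb0 : 0 ≤ Mb := le_trans (abs_nonneg _) (hMb 0 0).1
    have hWb0 : 0 ≤ Wb := le_trans (abs_nonneg _) (hWb 0 ⟨by linarith, hMb0⟩).1
    set K := Wb + Wb/γ + Wb*Kb + Wb*Kb*CP^2/γ with hKdef
    have hK0 : 0 ≤ K := by positivity
    have hDbound : ∀ t ∈ Icc (0:ℝ) T, (∫ x in (0:ℝ)..1, Pt t x) ≤ K * Eg t := by
      intro t htT
      -- slice differentiability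
      have hvd : Differentiable ℝ (v t) := (contDiff_slicex hv t).differentiable (by norm_num)
      have hhatvd : Differentiable ℝ (hatv t) :=
        (contDiff_slicex hhatv t).differentiable (by norm_num)
      have hud : Differentiable ℝ (u t) := (contDiff_slicex hu t).differentiable (by norm_num)
      have hhatud : Differentiable ℝ (hatu t) :=
        (contDiff_slicex hhatu t).differentiable (by norm_num)
      have hvxd : Differentiable ℝ (deriv (v t)) :=
        (contDiff_slicex (f := fun s => deriv (v s)) hvxC t).differentiable (by norm_num)
      have hhatvxd : Differentiable ℝ (deriv (hatv t)) :=
        (contDiff_slicex (f := fun s => deriv (hatv s)) hhatvxC t).differentiable (by norm_num)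
      have huxd : Differentiable ℝ (deriv (u t)) :=
        (contDiff_slicex (f := fun s => deriv (u s)) huxC t).differentiable (by norm_num)
      have hhatuxd : Differentiable ℝ (deriv (hatu t)) :=
        (contDiff_slicex (f := fun s => deriv (hatu s)) hhatuxC t).differentiable (by norm_num)
      have huxxd : Differentiable ℝ (deriv (deriv (u t))) :=
        (contDiff_slicex (f := fun s => deriv (deriv (u s))) huxxC t).differentiable (by norm_num)
      have hhatuxxd : Differentiable ℝ (deriv (deriv (hatu t))) :=
        (contDiff_slicex (f := fun s => deriv (deriv (hatu s))) hhatuxxC t).differentiable (by norm_num)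
      -- splitting of derivatives of differences
      have hd1ψ : deriv (ψ t) = fun y => deriv (v t) y - deriv (hatv t) y := by
        funext y
        simp only [hψdef]
        exact deriv_sub (hvd y) (hhatvd y)
      have hsxx : ∀ x, ψxx t x = deriv (deriv (v t)) x - deriv (deriv (hatv t)) x := by
        intro x
        simp only [hψxxdef, hd1ψ]
        exact deriv_sub (hvxd x) (hhatvxd x)
      have hd1φ : deriv (φ t) = fun y => deriv (u t) y - deriv (hatu t) y := by
        funext y
        simp only [hφdef]
        exact deriv_sub (hud y) (hhatud y)
      have hd2φ : deriv (deriv (φ t)) = fun y => deriv (deriv (u t)) y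
          - deriv (deriv (hatu t)) y := by
        funext y
        rw [hd1φ]
        exact deriv_sub (huxd y) (hhatuxd y)
      have hb3 : ∀ x, deriv (deriv (deriv (φ t))) x
          = deriv (deriv (deriv (u t))) x - deriv (deriv (deriv (hatu t))) x := by
        intro x
        rw [hd2φ]
        exact deriv_sub (huxxd x) (hhatuxxd x)
      -- the equation for ψt
      set Δ : ℝ → ℝ := fun x => deriv (fun y => deriv W (u t y)) x
        - deriv (fun y => deriv W (hatu t y)) x with hΔdef
      have hψt_eq : ∀ x, ψt t x = Δ x + μ * ψxx t x - γ * deriv (deriv (deriv (φ t))) x := by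
        intro x
        have hvtd : DifferentiableAt ℝ (fun s => v s x) t :=
          ((contDiff_slicet hv x).differentiable (by norm_num) t)
        have hhatvtd : DifferentiableAt ℝ (fun s => hatv s x) t :=
          ((contDiff_slicet hhatv x).differentiable (by norm_num) t)
        have e1 : ψt t x = deriv (fun s => v s x) t - deriv (fun s => hatv s x) t := by
          simp only [hψtdef, hψdef]
          exact deriv_sub hvtd hhatvtd
        rw [e1, hsxx x, hb3 x, hΔdef]
        have h2 := heq2 t x
        have h2' := heq2' t x
        simp only
        linarith
      -- the four integrands
      set I1 : ℝ → ℝ := fun x => ψ t x * Δ x with hI1def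
      set I2 : ℝ → ℝ := fun x => ψ t x * ψxx t x with hI2def
      set I3 : ℝ → ℝ := fun x => ψ t x * deriv (deriv (deriv (φ t))) x with hI3def
      set I4 : ℝ → ℝ := fun x => φx t x * ψxx t x with hI4def
      have hPt_eq : ∀ x, Pt t x
          = 2 * I1 x + (2*μ) * I2 x + (-(2*γ)) * I3 x + (2*γ) * I4 x := by
        intro x
        simp only [hPtdef, hI1def, hI2def, hI3def, hI4def]
        rw [hψt_eq x]
        ring
      -- continuity of everything in sight
      have hca : Continuous (ψ t) := (haC t).continuous
      have hcb : Continuous (φ t) := (hbC t).continuous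
      have hca1 : Continuous (deriv (ψ t)) := (contDiff_slicex (f := fun s => deriv (ψ s)) hψxC t).continuous
      have hca2 : Continuous (fun x => ψxx t x) := (contDiff_slicex (f := fun s => deriv (deriv (ψ s))) hψxxC t).continuous
      have hcb1 : Continuous (deriv (φ t)) := (contDiff_slicex (f := fun s => deriv (φ s)) hφxC t).continuous
      have hcb2 : Continuous (deriv (deriv (φ t))) := (contDiff_slicex (f := fun s => deriv (deriv (φ s))) hφxxC t).continuous
      have hcb3 : Continuous (deriv (deriv (deriv (φ t)))) :=
        (contDiff_slicex (f := fun s => deriv (deriv (deriv (φ s)))) hφxxxC t).continuous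
      have hWuC : ContDiff ℝ 2 (fun y => deriv W (u t y)) :=
        hW'.comp ((contDiff_slicex hu t).of_le (by norm_num))
      have hWhuC : ContDiff ℝ 2 (fun y => deriv W (hatu t y)) :=
        hW'.comp ((contDiff_slicex hhatu t).of_le (by norm_num))
      have hcΔ : Continuous Δ := by
        have h1 : Continuous (deriv (fun y => deriv W (u t y))) :=
          (contDiff_deriv_one (n := 1) (by exact_mod_cast hWuC)).continuous
        have h2 : Continuous (deriv (fun y => deriv W (hatu t y))) :=
          (contDiff_deriv_one (n := 1) (by exact_mod_cast hWhuC)).continuous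
        exact h1.sub h2
      have hcI1 : Continuous I1 := hca.mul hcΔ
      have hcI2 : Continuous I2 := hca.mul hca2
      have hcI3 : Continuous I3 := hca.mul hcb3
      have hcI4 : Continuous (fun x => I4 x) := by
        have : Continuous (fun x => φx t x) := hcb1
        exact this.mul hca2
      -- splitting the integral
      have hsplit : (∫ x in (0:ℝ)..1, Pt t x)
          = 2 * (∫ x in (0:ℝ)..1, I1 x) + (2*μ) * (∫ x in (0:ℝ)..1, I2 x)
            + (-(2*γ)) * (∫ x in (0:ℝ)..1, I3 x) + (2*γ) * (∫ x in (0:ℝ)..1, I4 x) := by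
        rw [intervalIntegral.integral_congr (g := fun x =>
          2 * I1 x + (2*μ) * I2 x + (-(2*γ)) * I3 x + (2*γ) * I4 x) (fun x _ => hPt_eq x)]
        rw [intervalIntegral.integral_add
            (((((continuous_const.fun_mul hcI1).fun_add ((continuous_const.fun_mul hcI2))).fun_add
              (continuous_const.fun_mul hcI3))).intervalIntegrable 0 1)
            ((continuous_const.fun_mul hcI4).intervalIntegrable 0 1),
          intervalIntegral.integral_add
            (((continuous_const.fun_mul hcI1).fun_add (continuous_const.fun_mul hcI2)).intervalIntegrable 0 1)
            ((continuous_const.fun_mul hcI3).intervalIntegrable 0 1),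
          intervalIntegral.integral_add
            ((continuous_const.fun_mul hcI1).intervalIntegrable 0 1)
            ((continuous_const.fun_mul hcI2).intervalIntegrable 0 1),
          intervalIntegral.integral_const_mul, intervalIntegral.integral_const_mul,
          intervalIntegral.integral_const_mul, intervalIntegral.integral_const_mul]
      -- integration by parts on the circle
      have hIBP : ∀ p q : ℝ → ℝ, ContDiff ℝ 1 p → ContDiff ℝ 1 q →
          Function.Periodic p 1 → Function.Periodic q 1 →
          (∫ x in (0:ℝ)..1, (deriv p x * q x + p x * deriv q x)) = 0 := by
        intro p q hp hq hpper hqper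
        have hpd := contDiff_one_iff_deriv.mp hp
        have hqd := contDiff_one_iff_deriv.mp hq
        have hg : Differentiable ℝ (fun x => p x * q x) := hpd.1.mul hqd.1
        have hderiv : deriv (fun x => p x * q x)
            = fun x => deriv p x * q x + p x * deriv q x := by
          funext x
          exact ((hpd.1 x).hasDerivAt.mul (hqd.1 x).hasDerivAt).deriv
        have hper2 : Function.Periodic (fun x => p x * q x) 1 := by
          intro y; simp [hpper y, hqper y]
        have := integral_deriv_periodic (fun x => p x * q x) hg
          (by rw [hderiv]
              exact (hpd.2.mul hqd.1.continuous).add (hpd.1.continuous.mul hqd.2)) hper2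
        rw [hderiv] at this
        exact this
      have hC1a : ContDiff ℝ 1 (ψ t) := (haC t).of_le (by norm_num)
      have hC1b : ContDiff ℝ 1 (φ t) := (hbC t).of_le (by norm_num)
      have hC1a1 : ContDiff ℝ 1 (deriv (ψ t)) := (contDiff_slicex (f := fun s => deriv (ψ s)) hψxC t).of_le (by norm_num)
      have hC1b1 : ContDiff ℝ 1 (deriv (φ t)) := (contDiff_slicex (f := fun s => deriv (φ s)) hφxC t).of_le (by norm_num)
      have hC1b2 : ContDiff ℝ 1 (deriv (deriv (φ t))) :=
        (contDiff_slicex (f := fun s => deriv (deriv (φ s))) hφxxC t).of_le (by norm_num)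
      have pa := hψper t
      have pa1 := pa.deriv_periodic
      have pb := hφper t
      have pb1 := pb.deriv_periodic
      have pb2 := pb1.deriv_periodic
      -- the μ-term
      have hIBPA := hIBP (ψ t) (deriv (ψ t)) hC1a hC1a1 pa pa1
      have hI2eq : (∫ x in (0:ℝ)..1, I2 x)
          = - ∫ x in (0:ℝ)..1, (deriv (ψ t) x)^2 := by
        rw [intervalIntegral.integral_add ((hca1.fun_mul hca1).intervalIntegrable 0 1)
          ((hca.fun_mul hca2).intervalIntegrable 0 1)] at hIBPA
        have e : (∫ x in (0:ℝ)..1, deriv (ψ t) x * deriv (ψ t) x)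
            = ∫ x in (0:ℝ)..1, (deriv (ψ t) x)^2 :=
          intervalIntegral.integral_congr (fun x _ => by ring)
        rw [e] at hIBPA
        have e2 : (∫ x in (0:ℝ)..1, ψ t x * deriv (deriv (ψ t)) x)
            = ∫ x in (0:ℝ)..1, I2 x :=
          intervalIntegral.integral_congr (fun x _ => rfl)
        rw [e2] at hIBPA
        linarith
      -- the dispersive terms cancel
      have hIBPB := hIBP (ψ t) (deriv (deriv (φ t))) hC1a hC1b2 pa pb2
      have hI3eq : (∫ x in (0:ℝ)..1, I3 x)
          = - ∫ x in (0:ℝ)..1, deriv (ψ t) x * deriv (deriv (φ t)) x := by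
        rw [intervalIntegral.integral_add ((hca1.fun_mul hcb2).intervalIntegrable 0 1)
          ((hca.fun_mul hcb3).intervalIntegrable 0 1)] at hIBPB
        have e2 : (∫ x in (0:ℝ)..1, ψ t x * deriv (deriv (deriv (φ t))) x)
            = ∫ x in (0:ℝ)..1, I3 x :=
          intervalIntegral.integral_congr (fun x _ => rfl)
        rw [e2] at hIBPB
        linarith
      have hIBPC := hIBP (deriv (φ t)) (deriv (ψ t)) hC1b1 hC1a1 pb1 pa1
      have hI4eq : (∫ x in (0:ℝ)..1, I4 x)
          = - ∫ x in (0:ℝ)..1, deriv (deriv (φ t)) x * deriv (ψ t) x := by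
        rw [intervalIntegral.integral_add ((hcb2.fun_mul hca1).intervalIntegrable 0 1)
          ((hcb1.fun_mul hca2).intervalIntegrable 0 1)] at hIBPC
        have e2 : (∫ x in (0:ℝ)..1, deriv (φ t) x * deriv (deriv (ψ t)) x)
            = ∫ x in (0:ℝ)..1, I4 x :=
          intervalIntegral.integral_congr (fun x _ => rfl)
        rw [e2] at hIBPC
        linarith
      have hcancel : (-(2*γ)) * (∫ x in (0:ℝ)..1, I3 x)
          + (2*γ) * (∫ x in (0:ℝ)..1, I4 x) = 0 := by
        rw [hI3eq, hI4eq]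
        have e : (∫ x in (0:ℝ)..1, deriv (ψ t) x * deriv (deriv (φ t)) x)
            = ∫ x in (0:ℝ)..1, deriv (deriv (φ t)) x * deriv (ψ t) x :=
          intervalIntegral.integral_congr (fun x _ => by ring)
        rw [e]
        ring
      have hJnonneg : 0 ≤ ∫ x in (0:ℝ)..1, (deriv (ψ t) x)^2 :=
        intervalIntegral.integral_nonneg zero_le_one (fun x _ => sq_nonneg _)
      -- reduction
      have hred : (∫ x in (0:ℝ)..1, Pt t x) ≤ 2 * ∫ x in (0:ℝ)..1, I1 x := by
        rw [hsplit, hI2eq]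
        have := mul_nonneg hμ hJnonneg
        nlinarith [hcancel]
      -- chain rule for Δ
      have hchain : ∀ x, Δ x = deriv (deriv W) (u t x) * deriv (u t) x
          - deriv (deriv W) (hatu t x) * deriv (hatu t) x := by
        intro x
        have h1 : deriv (fun y => deriv W (u t y)) x
            = deriv (deriv W) (u t x) * deriv (u t) x := by
          have := deriv_comp x (hW'.differentiable (by norm_num) (u t x)) (hud x)
          simpa [Function.comp_def] using this
        have h2 : deriv (fun y => deriv W (hatu t y)) x
            = deriv (deriv W) (hatu t x) * deriv (hatu t) x := by
          have := deriv_comp x (hW'.differentiable (by norm_num) (hatu t x)) (hhatud x)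
          simpa [Function.comp_def] using this
        simp only [hΔdef, h1, h2]
      -- pointwise bound
      have hBnd : ∀ x ∈ Icc (0:ℝ) 1, 2 * I1 x
          ≤ Wb*((ψ t x)^2 + (φx t x)^2) + Wb*Kb*((ψ t x)^2 + (φ t x)^2) := by
        intro x hx
        have hu_in : u t x ∈ Icc (-Mb) Mb := by
          have := abs_le.mp (hMb t x).1; exact ⟨this.1, this.2⟩
        have hhatu_in : hatu t x ∈ Icc (-Mb) Mb := by
          have := abs_le.mp (hMb t x).2; exact ⟨this.1, this.2⟩
        have hW2u : |deriv (deriv W) (u t x)| ≤ Wb := (hWb _ hu_in).2.2.1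
        have hW2diff : |deriv (deriv W) (u t x) - deriv (deriv W) (hatu t x)|
            ≤ Wb * |φ t x| := by
          have hmvt := Convex.norm_image_sub_le_of_norm_deriv_le
            (f := deriv (deriv W)) (s := Icc (-Mb) Mb)
            (fun y _ => (hW''.differentiable (by norm_num) y))
            (fun y hy => by rw [Real.norm_eq_abs]; exact (hWb y hy).2.2.2)
            (convex_Icc _ _) hhatu_in hu_in
          simp only [Real.norm_eq_abs] at hmvt
          have e : |u t x - hatu t x| = |φ t x| := by simp [hφdef]
          rw [e] at hmvt
          exact hmvt
        have hKb' : |deriv (hatu t) x| ≤ Kb := by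
          have := hKb (t, x) (Set.mk_mem_prod htT hx)
          simpa [Real.norm_eq_abs] using this
        have hΔx : Δ x = deriv (deriv W) (u t x) * φx t x
            + (deriv (deriv W) (u t x) - deriv (deriv W) (hatu t x)) * deriv (hatu t) x := by
          rw [hchain x]
          have e1 : deriv (u t) x = φx t x + deriv (hatu t) x := by
            have e2 : deriv (φ t) x = deriv (u t) x - deriv (hatu t) x := by rw [hd1φ]
            simp only [hφxdef]
            linarith
          rw [e1]; ring
        have habsΔ : |Δ x| ≤ Wb * |φx t x| + (Wb * |φ t x|) * Kb := by
          rw [hΔx]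
          refine (abs_add_le _ _).trans ?_
          rw [abs_mul, abs_mul]
          gcongr
        have hI1b : I1 x ≤ |ψ t x| * (Wb * |φx t x| + (Wb * |φ t x|) * Kb) := by
          calc I1 x ≤ |I1 x| := le_abs_self _
          _ = |ψ t x| * |Δ x| := by rw [hI1def]; exact abs_mul _ _
          _ ≤ |ψ t x| * (Wb * |φx t x| + (Wb * |φ t x|) * Kb) :=
            mul_le_mul_of_nonneg_left habsΔ (abs_nonneg _)
        have t1 : 2*(|ψ t x| * |φx t x|) ≤ (ψ t x)^2 + (φx t x)^2 := by
          have := two_mul_le_add_sq |ψ t x| |φx t x|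
          rw [sq_abs, sq_abs] at this
          linarith
        have t2 : 2*(|ψ t x| * |φ t x|) ≤ (ψ t x)^2 + (φ t x)^2 := by
          have := two_mul_le_add_sq |ψ t x| |φ t x|
          rw [sq_abs, sq_abs] at this
          linarith
        have u1 := mul_le_mul_of_nonneg_left t1 hWb0
        have u2 := mul_le_mul_of_nonneg_left t2 (mul_nonneg hWb0 hKb0)
        linarith [hI1b, u1, u2]
      -- integrate the bound
      have hφxcont : Continuous (fun x => φx t x) := hcb1
      have hRHScont : Continuous (fun x => Wb*((ψ t x)^2 + (φx t x)^2)
          + Wb*Kb*((ψ t x)^2 + (φ t x)^2)) :=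
        (continuous_const.mul ((hca.pow 2).add (hφxcont.pow 2))).add
          (continuous_const.mul ((hca.pow 2).add (hcb.pow 2)))
      have hmono : (∫ x in (0:ℝ)..1, 2 * I1 x)
          ≤ ∫ x in (0:ℝ)..1, (Wb*((ψ t x)^2 + (φx t x)^2)
            + Wb*Kb*((ψ t x)^2 + (φ t x)^2)) :=
        intervalIntegral.integral_mono_on zero_le_one
          ((continuous_const.mul hcI1).intervalIntegrable 0 1)
          (hRHScont.intervalIntegrable 0 1) hBnd
      have hmono' : 2 * (∫ x in (0:ℝ)..1, I1 x)
          ≤ ∫ x in (0:ℝ)..1, (Wb*((ψ t x)^2 + (φx t x)^2)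
            + Wb*Kb*((ψ t x)^2 + (φ t x)^2)) := by
        rw [← intervalIntegral.integral_const_mul]
        exact hmono
      have intA : IntervalIntegrable (fun x => (ψ t x)^2) MeasureTheory.volume 0 1 :=
        (hca.pow 2).intervalIntegrable 0 1
      have intB : IntervalIntegrable (fun x => (φx t x)^2) MeasureTheory.volume 0 1 :=
        (hφxcont.pow 2).intervalIntegrable 0 1
      have intC : IntervalIntegrable (fun x => (φ t x)^2) MeasureTheory.volume 0 1 :=
        (hcb.pow 2).intervalIntegrable 0 1
      have hRHSeq : (∫ x in (0:ℝ)..1, (Wb*((ψ t x)^2 + (φx t x)^2)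
            + Wb*Kb*((ψ t x)^2 + (φ t x)^2)))
          = Wb * ((∫ x in (0:ℝ)..1, (ψ t x)^2) + (∫ x in (0:ℝ)..1, (φx t x)^2))
            + Wb*Kb * ((∫ x in (0:ℝ)..1, (ψ t x)^2) + (∫ x in (0:ℝ)..1, (φ t x)^2)) := by
        rw [intervalIntegral.integral_add
            ((continuous_const.fun_mul ((hca.fun_pow 2).fun_add (hφxcont.fun_pow 2))).intervalIntegrable 0 1)
            ((continuous_const.fun_mul ((hca.fun_pow 2).fun_add (hcb.fun_pow 2))).intervalIntegrable 0 1),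
          intervalIntegral.integral_const_mul, intervalIntegral.integral_const_mul,
          intervalIntegral.integral_add intA intB, intervalIntegral.integral_add intA intC]
      have hPoin : (∫ x in (0:ℝ)..1, (φ t x)^2)
          ≤ CP^2 * ∫ x in (0:ℝ)..1, (φx t x)^2 := by
        have := hCP (φ t) hC1b pb (by simpa only [hφdef] using hmean t)
        exact this
      have hEsplit : Eg t = (∫ x in (0:ℝ)..1, (ψ t x)^2)
          + γ * ∫ x in (0:ℝ)..1, (φx t x)^2 := by
        simp only [hEgdef]
        rw [intervalIntegral.integral_add intA
          ((continuous_const.fun_mul (hφxcont.fun_pow 2)).intervalIntegrable 0 1),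
          intervalIntegral.integral_const_mul]
      have hA2 : 0 ≤ ∫ x in (0:ℝ)..1, (ψ t x)^2 :=
        intervalIntegral.integral_nonneg zero_le_one (fun x _ => sq_nonneg _)
      have hB2 : 0 ≤ ∫ x in (0:ℝ)..1, (φx t x)^2 :=
        intervalIntegral.integral_nonneg zero_le_one (fun x _ => sq_nonneg _)
      have ha' : (∫ x in (0:ℝ)..1, (ψ t x)^2) ≤ Eg t := by nlinarith
      have hb1' : (∫ x in (0:ℝ)..1, (φx t x)^2) ≤ Eg t / γ := by
        rw [le_div_iff₀ hγ]; nlinarith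
      have hb0' : (∫ x in (0:ℝ)..1, (φ t x)^2) ≤ CP^2 * (Eg t / γ) :=
        le_trans hPoin (mul_le_mul_of_nonneg_left hb1' (sq_nonneg CP))
      have f1 := mul_le_mul_of_nonneg_left ha' hWb0
      have f2 := mul_le_mul_of_nonneg_left hb1' hWb0
      have f3 := mul_le_mul_of_nonneg_left ha' (mul_nonneg hWb0 hKb0)
      have f4 := mul_le_mul_of_nonneg_left hb0' (mul_nonneg hWb0 hKb0)
      have hKE : K * Eg t = Wb*Eg t + Wb*(Eg t/γ) + Wb*Kb*Eg t + Wb*Kb*(CP^2*(Eg t/γ)) := by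
        rw [hKdef]; ring
      have hfin : 2 * (∫ x in (0:ℝ)..1, I1 x) ≤ K * Eg t := by
        rw [hKE]
        calc 2 * (∫ x in (0:ℝ)..1, I1 x)
            ≤ _ := hmono'
        _ = _ := hRHSeq
        _ ≤ Wb*Eg t + Wb*(Eg t/γ) + Wb*Kb*Eg t + Wb*Kb*(CP^2*(Eg t/γ)) := by
            nlinarith [f1, f2, f3, f4]
      linarith [hred, hfin]
    set g : ℝ → ℝ := fun s => Eg s * Real.exp (-K * s) with hgdef
    have hg' : ∀ s, HasDerivAt g ((∫ x in (0:ℝ)..1, Pt s x) * Real.exp (-K*s)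
        + Eg s * (Real.exp (-K*s) * (-K))) s := by
      intro s
      have h1 : HasDerivAt (fun r : ℝ => -K * r) (-K) s := by
        simpa using (hasDerivAt_id s).const_mul (-K)
      exact (hE' s).mul h1.exp
    have hgcont : Continuous g := by
      have hEc : Continuous Eg := by
        rw [continuous_iff_continuousAt]; exact fun s => (hE' s).continuousAt
      exact hEc.mul (Real.continuous_exp.comp (continuous_const.mul continuous_id))
    have hanti : AntitoneOn g (Icc 0 T) := by
      apply antitoneOn_of_deriv_nonpos (convex_Icc 0 T) hgcont.continuousOn
      · intro x hx
        exact (hg' x).differentiableAt.differentiableWithinAt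
      · intro x hx
        rw [interior_Icc] at hx
        rw [(hg' x).deriv]
        have hb := hDbound x ⟨hx.1.le, hx.2.le⟩
        have he := Real.exp_pos (-K*x)
        nlinarith [mul_nonneg (sub_nonneg.mpr hb) he.le]
    have hgT : g T ≤ g 0 := hanti ⟨le_refl 0, hT⟩ ⟨hT, le_refl T⟩ hT
    have hg0 : g 0 = 0 := by simp [hgdef, hE0]
    have hfin : Eg T * Real.exp (-K*T) ≤ 0 := by rw [← hg0]; exact hgT
    have he := Real.exp_pos (-K*T)
    nlinarith [hEnonneg T]
  intro t ht x
  have hEt := hEzero t ht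
  set h : ℝ → ℝ := fun y => (ψ t y) ^ 2 + γ * (φx t y) ^ 2 with hhdef
  have hφxc : Continuous (φx t) :=
    hφxC.continuous.comp ((continuous_const (y := t)).prodMk continuous_id)
  have hhcont : Continuous h :=
    (((haC t).continuous.pow 2).add (continuous_const.mul (hφxc.pow 2)))
  have hnonneg : ∀ y, 0 ≤ h y := by
    intro y
    have := sq_nonneg (ψ t y)
    have := sq_nonneg (φx t y)
    simp only [hhdef]
    nlinarith
  have hint : ∫ y in (0:ℝ)..1, h y = 0 := hEt
  have hae : h =ᵐ[MeasureTheory.volume.restrict (Ioc (0:ℝ) 1)] 0 := by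
    refine (intervalIntegral.integral_eq_zero_iff_of_le_of_nonneg_ae zero_le_one ?_
      (hhcont.intervalIntegrable 0 1)).mp hint
    exact MeasureTheory.ae_of_all _ fun y => hnonneg y
  have heq0 : Set.EqOn h 0 (Ioc (0:ℝ) 1) :=
    MeasureTheory.Measure.eqOn_Ioc_of_ae_eq MeasureTheory.volume hae hhcont.continuousOn continuousOn_const
  have hhper : Function.Periodic h 1 := by
    intro y
    simp only [hhdef]
    rw [(hψper t) y]
    have : φx t (y + 1) = φx t y := (hφper t).deriv_periodic y
    rw [this]
  have hall : ∀ y, h y = 0 := by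
    intro y
    have hn : y - ((⌈y⌉ : ℝ) - 1) ∈ Ioc (0:ℝ) 1 := by
      constructor
      · have := Int.ceil_lt_add_one y
        linarith
      · have := Int.le_ceil y
        linarith
    have hper' := hhper.sub_int_mul_eq (x := y) (n := ⌈y⌉ - 1)
    have : h (y - ((⌈y⌉ : ℝ) - 1)) = 0 := heq0 hn
    rw [← hper']
    convert this using 2
    push_cast
    ring
  have hφx0 : ∀ y, φx t y = 0 := by
    intro y
    have hy := hall y
    have h2 : (φx t y) ^ 2 = 0 := by
      have := sq_nonneg (ψ t y)
      have := sq_nonneg (φx t y)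
      simp only [hhdef] at hy
      nlinarith
    exact pow_eq_zero_iff two_ne_zero |>.mp h2
  have hψ0 : ψ t x = 0 := by
    have hy := hall x
    have h2 : (ψ t x) ^ 2 = 0 := by
      have := sq_nonneg (ψ t x)
      have := sq_nonneg (φx t x)
      simp only [hhdef] at hy
      nlinarith
    exact pow_eq_zero_iff two_ne_zero |>.mp h2
  have hconst : ∀ y, φ t y = φ t 0 := fun y =>
    is_const_of_deriv_eq_zero (hbdiff t) hφx0 y 0
  have hmean' : (∫ y in (0:ℝ)..1, φ t y) = 0 := by
    simpa only [hφdef] using hmean t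
  have hc0 : φ t 0 = 0 := by
    have : (fun y => φ t y) = fun _ => φ t 0 := funext hconst
    rw [intervalIntegral.integral_congr (g := fun _ => φ t 0)
      (fun y _ => hconst y)] at hmean'
    simpa using hmean'
  have hφt0 : φ t x = 0 := by rw [hconst x, hc0]
  constructor
  · have : u t x - hatu t x = 0 := by simpa [hφdef] using hφt0
    linarith
  · have : v t x - hatv t x = 0 := by simpa [hψdef] using hψ0
    linarith
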